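/- Let ε₀ ≥ 0, k ≥ 1, and t := e^{ε₀}/(e^{ε₀}+1). Let b be a random vector in {0,1}^k with an arbitrary distribution, and let b̃ be obtained from b by applying the random response mechanism with parameter ε₀ independently to each coordinate (conditionally on b). Define ẑ := 1 if all coordinates of b equal 1 and ẑ := 0 otherwise, and define z̃ analogously from b̃. Let α̂ := Pr[ẑ = 0]. Then Pr[z̃ = ẑ] ≥ t^k·(1 − α̂) + t·α̂ ≥ t·α̂. In particular, if α̂ = α(1 − δ_err) then Pr[z̃ = ẑ] ≥ t·α·(1 − δ_err). -/

import Mathlib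

/-- Probability that the random response mechanism with parameter `ε₀`
outputs the bit `v` on input bit `b`. -/
noncomputable def rrProb (ε₀ : ℝ) (b v : Bool) : ℝ :=
  if v = b then Real.exp ε₀ / (Real.exp ε₀ + 1) else 1 / (Real.exp ε₀ + 1)

/-- `Pr[z̃ = ẑ]`: the probability that the all-ones indicator of the perturbed
vector `b̃` (each coordinate of `b ∼ q` flipped independently via random
response with parameter `ε₀`) agrees with the all-ones indicator of `b`. -/
noncomputable def matchProb (ε₀ : ℝ) (k : ℕ) (q : (Fin k → Bool) → ℝ) : ℝ :=
  ∑ u : Fin k → Bool, q u * ∑ v : Fin k → Bool, if ((∀ j, v j = true) ↔ (∀ j, u j = true))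
      then ∏ j, rrProb ε₀ (u j) (v j) else 0

/-- with `t = e^{ε₀}/(e^{ε₀}+1)`, `b ∼ q` an arbitrary random
vector in `{0,1}^k`, `b̃` its coordinatewise random-response perturbation,
`ẑ`/`z̃` the all-ones indicators of `b`/`b̃`, and `α̂ = Pr[ẑ = 0]`:
`Pr[z̃ = ẑ] ≥ t^k (1 - α̂) + t α̂ ≥ t α̂`; in particular, if
`α̂ = α (1 - δ_err)` then `Pr[z̃ = ẑ] ≥ t α (1 - δ_err)`. -/
theorem stmt_13 (ε₀ : ℝ) (hε : 0 ≤ ε₀) (k : ℕ) (hk : 1 ≤ k)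
    (t : ℝ) (ht : t = Real.exp ε₀ / (Real.exp ε₀ + 1))
    (q : (Fin k → Bool) → ℝ) (hq0 : ∀ u, 0 ≤ q u) (hq1 : ∑ u, q u = 1)
    (αhat : ℝ) (hαhat : αhat = ∑ u, if ¬ (∀ j, u j = true) then q u else 0) :
    matchProb ε₀ k q ≥ t ^ k * (1 - αhat) + t * αhat ∧
    matchProb ε₀ k q ≥ t * αhat ∧
    (∀ α δerr : ℝ, αhat = α * (1 - δerr) →
      matchProb ε₀ k q ≥ t * α * (1 - δerr)) := by
  have hE : (0:ℝ) < Real.exp ε₀ + 1 := by positivity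
  have hE1 : (1:ℝ) ≤ Real.exp ε₀ := Real.one_le_exp hε
  have ht0 : 0 ≤ t := by rw [ht]; positivity
  have ht1 : t ≤ 1 := by rw [ht, div_le_one hE]; linarith
  have h_tt : rrProb ε₀ true true = t := by simp [rrProb, ht]
  have h_ft : rrProb ε₀ false true = 1 - t := by
    simp only [rrProb, if_neg (by simp : ¬ (true = false))]
    rw [ht]; field_simp; ring
  have hrr0 : ∀ b v, 0 ≤ rrProb ε₀ b v := by
    intro b v; unfold rrProb; split <;> positivity
  have hrrle : ∀ b, rrProb ε₀ b true ≤ 1 := by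
    intro b; cases b
    · rw [h_ft]; linarith
    · rw [h_tt]; exact ht1
  have hsum1 : ∀ b : Bool, rrProb ε₀ b true + rrProb ε₀ b false = 1 := by
    intro b; cases b <;> simp [rrProb] <;> field_simp <;> ring
  have hprod1 : ∀ u : Fin k → Bool,
      ∑ v : Fin k → Bool, ∏ j, rrProb ε₀ (u j) (v j) = 1 := by
    intro u
    rw [← Fintype.piFinset_univ, ← Finset.prod_univ_sum]
    have : ∀ j : Fin k, ∑ b ∈ Finset.univ, rrProb ε₀ (u j) b = 1 := by
      intro j; rw [Fintype.sum_bool]; exact hsum1 (u j)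
    exact Finset.prod_eq_one fun j _ => this j
  have hsingle : ∀ (g : (Fin k → Bool) → ℝ),
      ∑ v : Fin k → Bool, (if (∀ j, v j = true) then g v else 0)
        = g (fun _ => true) := by
    intro g
    rw [Finset.sum_eq_single (fun _ => true)]
    · simp
    · intro v _ hv
      rw [if_neg]
      intro h; exact hv (funext h)
    · simp
  -- per-u lower bound on the inner sum
  have hkey : ∀ u : Fin k → Bool,
      (∑ v : Fin k → Bool, if ((∀ j, v j = true) ↔ (∀ j, u j = true))
          then ∏ j, rrProb ε₀ (u j) (v j) else 0)
        ≥ (if (∀ j, u j = true) then t ^ k else t) := by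
    intro u
    by_cases hu : ∀ j, u j = true
    · rw [if_pos hu]
      have : (∑ v : Fin k → Bool, if ((∀ j, v j = true) ↔ (∀ j, u j = true))
          then ∏ j, rrProb ε₀ (u j) (v j) else 0)
          = ∑ v : Fin k → Bool, if (∀ j, v j = true)
            then ∏ j, rrProb ε₀ (u j) (v j) else 0 := by
        apply Finset.sum_congr rfl
        intro v _
        congr 1
        simp [hu]
      rw [this, hsingle]
      have : ∀ j : Fin k, rrProb ε₀ (u j) true = t := by
        intro j; rw [hu j, h_tt]
      rw [Finset.prod_congr rfl (fun j _ => this j)]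
      simp
    · rw [if_neg hu]
      have heq : (∑ v : Fin k → Bool, if ((∀ j, v j = true) ↔ (∀ j, u j = true))
          then ∏ j, rrProb ε₀ (u j) (v j) else 0)
          = ∑ v : Fin k → Bool, ((∏ j, rrProb ε₀ (u j) (v j)) -
              (if (∀ j, v j = true) then ∏ j, rrProb ε₀ (u j) (v j) else 0)) := by
        apply Finset.sum_congr rfl
        intro v _
        by_cases hv : ∀ j, v j = true
        · rw [if_neg (by simp [hv, hu]), if_pos hv]; ring
        · rw [if_pos (by simp [hv, hu]), if_neg hv]; ring
      rw [heq, Finset.sum_sub_distrib, hprod1, hsingle]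
      -- goal : 1 - ∏ j, rrProb ε₀ (u j) true ≥ t
      push_neg at hu
      obtain ⟨j0, hj0⟩ := hu
      have hj0' : u j0 = false := by
        cases h : u j0
        · rfl
        · exact absurd h hj0
      have hle : (∏ j, rrProb ε₀ (u j) true) ≤ 1 - t := by
        rw [← Finset.mul_prod_erase Finset.univ _ (Finset.mem_univ j0)]
        have h1 : (∏ j ∈ Finset.univ.erase j0, rrProb ε₀ (u j) true) ≤ 1 :=
          Finset.prod_le_one (fun j _ => hrr0 _ _) (fun j _ => hrrle _)
        have h2 : (0:ℝ) ≤ ∏ j ∈ Finset.univ.erase j0, rrProb ε₀ (u j) true :=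
          Finset.prod_nonneg (fun j _ => hrr0 _ _)
        calc rrProb ε₀ (u j0) true * ∏ j ∈ Finset.univ.erase j0, rrProb ε₀ (u j) true
            ≤ rrProb ε₀ (u j0) true * 1 := by
              apply mul_le_mul_of_nonneg_left h1 (hrr0 _ _)
          _ = 1 - t := by rw [mul_one, hj0', h_ft]
      linarith
  have hα1 : αhat ≤ 1 := by
    rw [hαhat, ← hq1]
    apply Finset.sum_le_sum
    intro u _
    split
    · exact le_rfl
    · exact hq0 u
  have hmain : matchProb ε₀ k q ≥ t ^ k * (1 - αhat) + t * αhat := by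
    have h1 : matchProb ε₀ k q ≥ ∑ u, q u * (if (∀ j, u j = true) then t ^ k else t) := by
      unfold matchProb
      apply Finset.sum_le_sum
      intro u _
      exact mul_le_mul_of_nonneg_left (hkey u) (hq0 u)
    have h2 : (∑ u, q u * (if (∀ j, u j = true) then t ^ k else t))
        = t ^ k * (1 - αhat) + t * αhat := by
      have h1mα : (1 - αhat) = ∑ u, (if (∀ j, u j = true) then q u else 0) := by
        rw [hαhat, ← hq1, ← Finset.sum_sub_distrib]
        apply Finset.sum_congr rfl
        intro u _
        by_cases P : ∀ j, u j = true <;> simp [P]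
      rw [h1mα, hαhat, Finset.mul_sum, Finset.mul_sum, ← Finset.sum_add_distrib]
      apply Finset.sum_congr rfl
      intro u _
      by_cases P : ∀ j, u j = true <;> simp [P] <;> ring
    linarith
  have hpos : 0 ≤ t ^ k * (1 - αhat) :=
    mul_nonneg (pow_nonneg ht0 k) (by linarith)
  refine ⟨hmain, by linarith, ?_⟩
  intro α δerr hαδ
  have : t * α * (1 - δerr) = t * αhat := by rw [hαδ]; ring
  linarith
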